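/- Let A = ⊕_{g ∈ S} ℤ·θ_g be a commutative ring which is free as a ℤ-module with basis indexed by a set S, suppose there is a submonoid M ⊆ S with a monoid action on S satisfying θ_e · θ_v = θ_{e+v} for e ∈ M, v ∈ S, and M is generated by elements Z₁,…,Z_r. Then in the localization of A at the product θ_{Z₁}···θ_{Z_r}, every θ_{Z_i} is invertible, and if the action of the group completion M^gp on itself extends to S making S an M^gp-set with the same multiplication rule, then the localization A[(θ_{Z₁}···θ_{Z_r})⁻¹] is free with basis indexed by M^gp · S. -/

import Mathlib

/-- Let `A = ⊕_{g ∈ S} ℤ·θ_g` be a commutative ring, free as a `ℤ`-module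
with basis indexed by a subset `S` of a set `S̄` on which the group completion `M^gp = G`
of a monoid `M ⊆ S` acts, with `θ_e · θ_v = θ_{e+v}` for `e ∈ M`, `v ∈ S`, and `M`
generated by elements `Z₁, …, Z_r`.  Then in the localization of `A` at
`θ_{Z₁} ⋯ θ_{Z_r}` every `θ_{Z_i}` is invertible, and (the action of `M^gp` being defined
on all of `S̄`, with the same multiplication rule on `M`) the localization
`A[(θ_{Z₁} ⋯ θ_{Z_r})⁻¹]` is free with basis indexed by `M^gp · S`. -/
theorem stmt7 {G : Type} [AddCommGroup G] {Sbar : Type} [AddAction G Sbar]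
    {A : Type} [CommRing A] (θ : Sbar → A) (S : Set Sbar)
    (b : Module.Basis S ℤ A) (hb : ∀ v : S, b v = θ v)
    (ι : G → Sbar) (hι : ∀ g h : G, ι (g + h) = g +ᵥ ι h)
    {r : ℕ} (Z : Fin r → G)
    (hgen : AddSubgroup.closure (Set.range Z) = ⊤)
    (hM : ∀ g ∈ AddSubmonoid.closure (Set.range Z), ι g ∈ S)
    (hSclosed : ∀ g ∈ AddSubmonoid.closure (Set.range Z), ∀ v ∈ S, g +ᵥ v ∈ S)
    (hrule : ∀ g ∈ AddSubmonoid.closure (Set.range Z), ∀ v ∈ S,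
      θ (ι g) * θ v = θ (g +ᵥ v)) :
    (∀ i : Fin r,
      IsUnit (algebraMap A (Localization.Away (∏ i, θ (ι (Z i)))) (θ (ι (Z i))))) ∧
    Nonempty (Module.Basis {x : Sbar | ∃ (g : G) (v : Sbar), v ∈ S ∧ x = g +ᵥ v} ℤ
      (Localization.Away (∏ i, θ (ι (Z i))))) := by
  classical
  set N := AddSubmonoid.closure (Set.range Z) with hNdef
  have hZN : ∀ i, Z i ∈ N := fun i => AddSubmonoid.subset_closure ⟨i, rfl⟩
  set σ := ∑ i, Z i with hσdef
  have hσ : σ ∈ N := AddSubmonoid.sum_mem _ fun i _ => hZN i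
  set T : Set Sbar := {x : Sbar | ∃ (g : G) (v : Sbar), v ∈ S ∧ x = g +ᵥ v} with hTdef
  set t := ∏ i, θ (ι (Z i)) with htdef
  set L := Localization.Away t with hLdef
  set f := algebraMap A L with hfdef
  -- multiplication rule on the monoid
  have hmul : ∀ a ∈ N, ∀ c ∈ N, θ (ι (a + c)) = θ (ι a) * θ (ι c) := by
    intro a ha c hc
    rw [hι a c, ← hrule a ha (ι c) (hM c hc)]
  have hone : θ (ι 0) = 1 := by
    have h1 : LinearMap.mulLeft ℤ (θ (ι 0)) = LinearMap.id := by
      apply b.ext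
      intro v
      simp only [LinearMap.mulLeft_apply, LinearMap.id_apply, hb]
      rw [hrule 0 (zero_mem N) v v.2, zero_vadd]
    have h2 := LinearMap.congr_fun h1 1
    simpa using h2
  have ht : ∀ s : Finset (Fin r), θ (ι (∑ i ∈ s, Z i)) = ∏ i ∈ s, θ (ι (Z i)) := by
    intro s
    induction s using Finset.induction_on with
    | empty => simpa using hone
    | insert _ _ hni ih =>
        rename_i a s
        rw [Finset.sum_insert hni, Finset.prod_insert hni,
          hmul (Z a) (hZN a) _ (AddSubmonoid.sum_mem _ fun i _ => hZN i), ih]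
  have htσ : t = θ (ι σ) := (ht Finset.univ).symm
  have hpow : ∀ n : ℕ, θ (ι (n • σ)) = t ^ n := by
    intro n
    induction n with
    | zero => simpa using hone
    | succ n ih =>
        rw [succ_nsmul, hmul _ (AddSubmonoid.nsmul_mem _ hσ n) _ hσ, ih, htσ, pow_succ]
  -- every element of G is a difference of monoid elements
  have hdec : ∀ g : G, ∃ p q : G, p ∈ N ∧ q ∈ N ∧ g = p - q := by
    intro g
    have hg : g ∈ AddSubgroup.closure (Set.range Z) := hgen ▸ AddSubgroup.mem_top g
    induction hg using AddSubgroup.closure_induction with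
    | mem x hx => exact ⟨x, 0, AddSubmonoid.subset_closure hx, zero_mem N, by simp⟩
    | zero => exact ⟨0, 0, zero_mem N, zero_mem N, by simp⟩
    | add x y hx hy ihx ihy =>
        obtain ⟨p, q, hp, hq, hxe⟩ := ihx
        obtain ⟨p', q', hp', hq', hye⟩ := ihy
        exact ⟨p + p', q + q', add_mem hp hp', add_mem hq hq', by rw [hxe, hye]; abel⟩
    | neg x hx ihx =>
        obtain ⟨p, q, hp, hq, hxe⟩ := ihx
        exact ⟨q, p, hq, hp, by rw [hxe]; abel⟩
  -- domination: every monoid element is dominated by a multiple of σ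
  have hdom : ∀ q ∈ N, ∃ m : ℕ, m • σ - q ∈ N := by
    intro q hq
    induction hq using AddSubmonoid.closure_induction with
    | mem x hx =>
        obtain ⟨i, rfl⟩ := hx
        refine ⟨1, ?_⟩
        have h1 : σ - Z i = ∑ j ∈ Finset.univ.erase i, Z j := by
          rw [sub_eq_iff_eq_add, hσdef]
          exact (Finset.sum_erase_add _ _ (Finset.mem_univ i)).symm
        rw [one_nsmul, h1]
        exact AddSubmonoid.sum_mem _ fun j _ => hZN j
    | zero => exact ⟨0, by simpa using zero_mem N⟩
    | add x y hx hy ihx ihy =>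
        obtain ⟨m₁, hm₁⟩ := ihx
        obtain ⟨m₂, hm₂⟩ := ihy
        refine ⟨m₁ + m₂, ?_⟩
        have : (m₁ + m₂) • σ - (x + y) = (m₁ • σ - x) + (m₂ • σ - y) := by
          rw [add_nsmul]; abel
        rw [this]
        exact add_mem hm₁ hm₂
  -- every θ (ι g), g ∈ N, becomes a unit in L
  have hu : ∀ g ∈ N, IsUnit (f (θ (ι g))) := by
    intro g hg
    obtain ⟨m, hm⟩ := hdom g hg
    have h1 : g + (m • σ - g) = m • σ := by abel
    have h2 : IsUnit (f (θ (ι g)) * f (θ (ι (m • σ - g)))) := by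
      rw [← map_mul, ← hmul g hg _ hm, h1, hpow m, map_pow]
      exact (IsLocalization.Away.algebraMap_isUnit (S := L) t).pow m
    exact isUnit_of_mul_isUnit_left h2
  -- Part 1
  have part1 : ∀ i : Fin r, IsUnit (f (θ (ι (Z i)))) := by
    intro i
    have hdvd : θ (ι (Z i)) ∣ t := htdef ▸ Finset.dvd_prod_of_mem _ (Finset.mem_univ i)
    exact isUnit_of_dvd_unit (map_dvd f hdvd)
      (IsLocalization.Away.algebraMap_isUnit (S := L) t)
  refine ⟨part1, ?_⟩
  -- t is a nonzerodivisor, hence f is injective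
  have hreg : t ∈ nonZeroDivisors A := by
    rw [mem_nonZeroDivisors_iff_right]
    intro a ha
    have einj : Function.Injective (fun v : S => (⟨σ +ᵥ (v : Sbar), hSclosed σ hσ v v.2⟩ : S)) := by
      intro x y hxy
      exact Subtype.ext (vadd_left_cancel σ (congrArg Subtype.val hxy))
    have li : LinearIndependent ℤ
        (fun v : S => b ⟨σ +ᵥ (v : Sbar), hSclosed σ hσ v v.2⟩) :=
      b.linearIndependent.comp _ einj
    have hFb : ∀ v : S, t * b v = b ⟨σ +ᵥ (v : Sbar), hSclosed σ hσ v v.2⟩ := by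
      intro v
      rw [hb, hb, htσ, hrule σ hσ v v.2]
    have h0 : Finsupp.linearCombination ℤ
        (fun v : S => b ⟨σ +ᵥ (v : Sbar), hSclosed σ hσ v v.2⟩) (b.repr a) = 0 := by
      have h3 := Finsupp.apply_linearCombination ℤ (LinearMap.mulLeft ℤ t) (⇑b) (b.repr a)
      rw [Module.Basis.linearCombination_repr] at h3
      have h4 : (⇑(LinearMap.mulLeft ℤ t) ∘ ⇑b) =
          fun v : S => b ⟨σ +ᵥ (v : Sbar), hSclosed σ hσ v v.2⟩ := by
        funext v
        simp only [Function.comp_apply, LinearMap.mulLeft_apply]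
        exact hFb v
      rw [h4] at h3
      rw [← h3, LinearMap.mulLeft_apply, mul_comm, ha]
    have h5 : b.repr a = 0 := linearIndependent_iff.mp li _ h0
    have h6 := congrArg b.repr.symm h5
    simpa using h6
  have f_inj : Function.Injective f :=
    IsLocalization.injective L (Submonoid.powers_le.mpr hreg)
  -- the unit-valued maps
  have hdec' := hdec
  choose P Q hP hQ hPQ using hdec'
  set u : G → Lˣ := fun g => if h : g ∈ N then (hu g h).unit else 1 with hudef
  have hucoe : ∀ g (hg : g ∈ N), (u g : L) = f (θ (ι g)) := by
    intro g hg
    simp only [hudef, dif_pos hg, IsUnit.unit_spec]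
  have hu0 : u 0 = 1 := by
    apply Units.ext
    rw [hucoe 0 (zero_mem N), hone, map_one, Units.val_one]
  have humul : ∀ a ∈ N, ∀ c ∈ N, u (a + c) = u a * u c := by
    intro a ha c hc
    apply Units.ext
    rw [Units.val_mul, hucoe _ (add_mem ha hc), hucoe a ha, hucoe c hc, ← map_mul,
      hmul a ha c hc]
  set Φ : G → Lˣ := fun g => u (P g) * (u (Q g))⁻¹ with hΦdef
  have hΦspec : ∀ g p q, p ∈ N → q ∈ N → g = p - q → Φ g * u q = u p := by
    intro g p q hp hq hpq
    have h1 : P g + q = p + Q g := by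
      have h2 : P g - Q g = p - q := by rw [← hPQ g, hpq]
      exact sub_eq_sub_iff_add_eq_add.mp h2
    have hkey : u (P g) * u q = u p * u (Q g) := by
      rw [← humul _ (hP g) _ hq, ← humul _ hp _ (hQ g), h1]
    calc Φ g * u q = u (P g) * u q * (u (Q g))⁻¹ := by
          rw [hΦdef]; exact mul_right_comm _ _ _
      _ = u p * u (Q g) * (u (Q g))⁻¹ := by rw [hkey]
      _ = u p := mul_inv_cancel_right _ _
  have hΦmem : ∀ g (hg : g ∈ N), (Φ g : L) = f (θ (ι g)) := by
    intro g hg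
    have h1 := hΦspec g g 0 hg (zero_mem N) (by rw [sub_zero])
    rw [hu0, mul_one] at h1
    rw [h1, hucoe g hg]
  have hΦadd : ∀ a c : G, Φ (a + c) = Φ a * Φ c := by
    intro a c
    have h1 := hΦspec a (P a) (Q a) (hP a) (hQ a) (hPQ a)
    have h2 := hΦspec c (P c) (Q c) (hP c) (hQ c) (hPQ c)
    have hac : a + c = (P a + P c) - (Q a + Q c) := by
      conv_lhs => rw [hPQ a, hPQ c]
      abel
    have h3 := hΦspec (a + c) (P a + P c) (Q a + Q c) (add_mem (hP a) (hP c))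
      (add_mem (hQ a) (hQ c)) hac
    have h4 : Φ (a + c) * u (Q a + Q c) = (Φ a * Φ c) * u (Q a + Q c) := by
      rw [h3, humul _ (hP a) _ (hP c), ← h1, ← h2, humul _ (hQ a) _ (hQ c),
        mul_mul_mul_comm]
    exact mul_right_cancel h4
  have hΦ0 : Φ 0 = 1 := by
    apply Units.ext
    rw [hΦmem 0 (zero_mem N), hone, map_one, Units.val_one]
  -- the candidate basis vectors
  have hmemT : ∀ (g : G) (v : Sbar), v ∈ S → g +ᵥ v ∈ T := fun g v hv => ⟨g, v, hv, rfl⟩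
  have hxmem : ∀ x : T, ∃ (g : G) (v : Sbar), v ∈ S ∧ (x : Sbar) = g +ᵥ v := fun x => x.2
  choose gT vT hvS hxT using hxmem
  set θT : T → L := fun x => (Φ (gT x) : L) * f (θ (vT x)) with hθTdef
  have hθTx : ∀ x : T, θT x = (Φ (gT x) : L) * f (θ (vT x)) := fun _ => rfl
  clear_value θT Φ u
  -- well-definedness / equivariance of θT
  have hθT : ∀ (x : T) (g : G) (v : Sbar) (hv : v ∈ S), (x : Sbar) = g +ᵥ v →
      θT x = (Φ g : L) * f (θ v) := by
    intro x g v hv hx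
    obtain ⟨p, q, hp, hq, hd⟩ := hdec (g - gT x)
    have h1 : gT x +ᵥ vT x = g +ᵥ v := by rw [← hxT x, hx]
    have h2 : (g - gT x) +ᵥ v = vT x := by
      rw [show g - gT x = -gT x + g by abel, add_vadd, ← h1, ← add_vadd,
        neg_add_cancel, zero_vadd]
    have hvadd : q +ᵥ vT x = p +ᵥ v := by
      have hp' : p = q + (g - gT x) := by rw [hd]; abel
      rw [hp', add_vadd, h2]
    have hA : θ (ι q) * θ (vT x) = θ (ι p) * θ v := by
      rw [hrule q hq _ (hvS x), hrule p hp v hv, hvadd]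
    have hL1 : (u q : L) * f (θ (vT x)) = (u p : L) * f (θ v) := by
      rw [hucoe q hq, hucoe p hp, ← map_mul, ← map_mul, hA]
    have hΦg : Φ g = Φ (gT x) * Φ (g - gT x) := by
      rw [← hΦadd, show gT x + (g - gT x) = g by abel]
    have hΦd : (Φ (g - gT x) : L) * (u q : L) = (u p : L) := by
      rw [← Units.val_mul, hΦspec (g - gT x) p q hp hq hd]
    have hcalc : θT x * (u q : L) = (Φ g : L) * f (θ v) * (u q : L) := by
      rw [hθTx x, hΦg, Units.val_mul, mul_assoc (Φ (gT x) : L),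
        mul_comm (f (θ (vT x))) ((u q : L)), hL1, ← hΦd,
        mul_assoc ((Φ (g - gT x)) : L), mul_comm ((u q : L)) (f (θ v)),
        ← mul_assoc, ← mul_assoc]
    exact (u q).isUnit.mul_right_cancel hcalc
  -- span
  have hspan : ⊤ ≤ Submodule.span ℤ (Set.range θT) := by
    intro z _
    obtain ⟨⟨a, s⟩, hmk⟩ := IsLocalization.mk'_surjective (Submonoid.powers t) (S := L) z
    obtain ⟨n, hn⟩ := s.2
    have hzs : z * f (s : A) = f a := by
      rw [← hmk]; exact IsLocalization.mk'_spec L a s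
    have hun : (u (n • σ) : L) = f (s : A) := by
      have hn' : t ^ n = (s : A) := hn
      rw [hucoe _ (AddSubmonoid.nsmul_mem _ hσ n), hpow n, hn']
    have h2 : f (s : A) * (Φ (-(n • σ)) : L) = 1 := by
      have h3 : (Φ (n • σ) : L) = (u (n • σ) : L) := by
        rw [hΦmem _ (AddSubmonoid.nsmul_mem _ hσ n), hucoe _ (AddSubmonoid.nsmul_mem _ hσ n)]
      rw [← hun, ← h3, ← Units.val_mul, ← hΦadd, add_neg_cancel, hΦ0, Units.val_one]
    have hz : z = (Φ (-(n • σ)) : L) * f a := by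
      calc z = z * (f (s : A) * (Φ (-(n • σ)) : L)) := by rw [h2, mul_one]
        _ = (z * f (s : A)) * (Φ (-(n • σ)) : L) := (mul_assoc _ _ _).symm
        _ = f a * (Φ (-(n • σ)) : L) := by rw [hzs]
        _ = (Φ (-(n • σ)) : L) * f a := mul_comm _ _
    rw [hz]
    have ha : f a ∈ Submodule.span ℤ (Set.range fun v : S => f (θ v)) := by
      have h4 : a ∈ Submodule.span ℤ (Set.range ⇑b) := by rw [b.span_eq]; trivial
      refine Submodule.span_induction
        (p := fun y _ => f y ∈ Submodule.span ℤ (Set.range fun v : S => f (θ v)))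
        ?_ ?_ ?_ ?_ h4
      · rintro y ⟨v, rfl⟩
        exact Submodule.subset_span ⟨v, by rw [hb]⟩
      · show f 0 ∈ _
        rw [map_zero]; exact zero_mem _
      · intro y₁ y₂ _ _ hy₁ hy₂
        show f (y₁ + y₂) ∈ _
        rw [map_add]; exact add_mem hy₁ hy₂
      · intro c y _ hy
        show f (c • y) ∈ _
        rw [map_zsmul]; exact Submodule.smul_mem _ _ hy
    refine Submodule.span_induction
      (p := fun y _ => (Φ (-(n • σ)) : L) * y ∈ Submodule.span ℤ (Set.range θT))
      ?_ ?_ ?_ ?_ ha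
    · rintro y ⟨v, rfl⟩
      have hx : (-(n • σ)) +ᵥ (v : Sbar) ∈ T := hmemT _ _ v.2
      have h6 := hθT ⟨(-(n • σ)) +ᵥ (v : Sbar), hx⟩ (-(n • σ)) v v.2 rfl
      show (Φ (-(n • σ)) : L) * f (θ v) ∈ _
      rw [← h6]
      exact Submodule.subset_span ⟨_, rfl⟩
    · show (Φ (-(n • σ)) : L) * 0 ∈ _
      rw [mul_zero]; exact zero_mem _
    · intro y₁ y₂ _ _ h₁ h₂
      show (Φ (-(n • σ)) : L) * (y₁ + y₂) ∈ _
      rw [mul_add]; exact add_mem h₁ h₂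
    · intro c y _ h₁
      show (Φ (-(n • σ)) : L) * (c • y) ∈ _
      rw [mul_smul_comm]; exact Submodule.smul_mem _ _ h₁
  -- linear independence
  have hli : LinearIndependent ℤ θT := by
    rw [linearIndependent_iff']
    intro s c hsum i hi
    have hex : ∀ x : T, ∃ m : ℕ, m • σ + gT x ∈ N := by
      intro x
      obtain ⟨p, q, hp, hq, hpq⟩ := hdec (gT x)
      obtain ⟨m, hm⟩ := hdom q hq
      refine ⟨m, ?_⟩
      have : m • σ + gT x = (m • σ - q) + p := by rw [hpq]; abel
      rw [this]; exact add_mem hm hp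
    choose m hm using hex
    set n := s.sup m with hndef
    have hnm : ∀ x ∈ s, n • σ + gT x ∈ N := by
      intro x hx
      have h1 : m x ≤ n := Finset.le_sup hx
      have h2 : n • σ + gT x = (n - m x) • σ + (m x • σ + gT x) := by
        rw [← add_assoc, ← add_nsmul, Nat.sub_add_cancel h1]
      rw [h2]
      exact add_mem (AddSubmonoid.nsmul_mem _ hσ _) (hm x)
    set w : T → Sbar := fun x => (n • σ) +ᵥ (x : Sbar) with hwdef
    have hwx : ∀ x : T, w x = (n • σ + gT x) +ᵥ vT x := by
      intro x
      rw [hwdef]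
      simp only []
      rw [hxT x, ← add_vadd]
    have hwS : ∀ x ∈ s, w x ∈ S := by
      intro x hx
      rw [hwx x]
      exact hSclosed _ (hnm x hx) _ (hvS x)
    have hkey : ∀ x ∈ s, (Φ (n • σ) : L) * θT x = f (θ (w x)) := by
      intro x hx
      rw [hθTx x, ← mul_assoc, ← Units.val_mul, ← hΦadd, hΦmem _ (hnm x hx), ← map_mul,
        hrule _ (hnm x hx) _ (hvS x), ← hwx x]
    have hsum2 : ∑ x ∈ s, c x • f (θ (w x)) = 0 := by
      calc ∑ x ∈ s, c x • f (θ (w x))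
          = ∑ x ∈ s, c x • ((Φ (n • σ) : L) * θT x) := by
            refine Finset.sum_congr rfl fun x hx => ?_
            rw [hkey x hx]
        _ = (Φ (n • σ) : L) * ∑ x ∈ s, c x • θT x := by
            rw [Finset.mul_sum]
            exact Finset.sum_congr rfl fun x _ => (mul_smul_comm _ _ _).symm
        _ = 0 := by rw [hsum, mul_zero]
    have hsum3 : ∑ x ∈ s, c x • θ (w x) = 0 := by
      apply f_inj
      rw [map_sum, map_zero]
      refine .trans (Finset.sum_congr rfl fun x _ => ?_) hsum2
      exact map_zsmul f _ _
    -- transfer to the basis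
    set W : T → A := fun x => if h : w x ∈ S then b ⟨w x, h⟩ else 0 with hWdef
    have hWs : ∀ x ∈ s, W x = θ (w x) := by
      intro x hx
      rw [hWdef]
      simp only [dif_pos (hwS x hx)]
      exact hb _
    have einj : Function.Injective (fun x : {y // y ∈ s} => (⟨w x, hwS x x.2⟩ : S)) := by
      intro x y hxy
      have h1 : w (x : T) = w (y : T) := congrArg Subtype.val hxy
      have h2 : ((x : T) : Sbar) = ((y : T) : Sbar) := vadd_left_cancel _ h1
      exact Subtype.ext (Subtype.ext h2)
    have hli2 : LinearIndependent ℤ (fun x : {y // y ∈ s} => W x) := by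
      have h3 : (fun x : {y // y ∈ s} => W (x : T)) =
          (⇑b ∘ fun x : {y // y ∈ s} => (⟨w x, hwS x x.2⟩ : S)) := by
        funext x
        simp only [Function.comp_apply, hWdef, dif_pos (hwS x x.2)]
      rw [h3]
      exact b.linearIndependent.comp _ einj
    have h7 : ∑ x : {y // y ∈ s}, c x • W x = 0 := by
      rw [Finset.sum_coe_sort s (fun y => c y • W y)]
      refine .trans (Finset.sum_congr rfl fun x hx => ?_) hsum3
      rw [hWs x hx]
    exact Fintype.linearIndependent_iff.mp hli2 (fun x => c x) h7 ⟨i, hi⟩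
  exact ⟨Module.Basis.mk hli hspan⟩
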